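/- Let U, V be subspaces of ℝ^n with orthogonal projections P_A, P_B, and define the two-sided residual iteration r_0 = y, s_k = (I-P_A) r_k, r_{k+1} = (I-P_B) s_k. Then the sum over all rounds of the fitted pieces, Σ_{k} (P_A r_k + P_B s_k), converges and equals the orthogonal projection of y onto U + V. -/

import Mathlib

open Submodule Filter Topology

noncomputable def proj {E : Type*} [NormedAddCommGroup E] [InnerProductSpace ℝ E]
    [FiniteDimensional ℝ E] (U : Submodule ℝ E) : E →ₗ[ℝ] E :=
  U.subtype ∘ₗ (orthogonalProjection U).toLinearMap

section aux

variable {E : Type*} [NormedAddCommGroup E] [InnerProductSpace ℝ E] [FiniteDimensional ℝ E]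

lemma proj_mem (W : Submodule ℝ E) (z : E) : proj W z ∈ W := by
  simp [proj]

lemma sub_proj_mem_orthogonal (W : Submodule ℝ E) (z : E) : z - proj W z ∈ Wᗮ :=
  W.sub_starProjection_mem_orthogonal z

lemma proj_eq_zero_of_mem_orthogonal (W : Submodule ℝ E) {z : E} (hz : z ∈ Wᗮ) :
    proj W z = 0 := by
  simp [proj, orthogonalProjection_mem_subspace_orthogonalComplement_eq_zero hz]

lemma pythag (W : Submodule ℝ E) (z : E) :
    ‖z‖ ^ 2 = ‖proj W z‖ ^ 2 + ‖z - proj W z‖ ^ 2 := by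
  have h := sub_proj_mem_orthogonal W z
  have hinner : (inner ℝ (proj W z) (z - proj W z) : ℝ) = 0 :=
    (Submodule.mem_orthogonal W _).1 h _ (proj_mem W z)
  have := norm_add_sq_real (proj W z) (z - proj W z)
  rw [add_sub_cancel] at this
  rw [this, hinner]; ring

lemma resid_le (W : Submodule ℝ E) (z : E) : ‖z - proj W z‖ ≤ ‖z‖ := by
  have h := pythag W z
  have : ‖z - proj W z‖ ^ 2 ≤ ‖z‖ ^ 2 := by nlinarith [sq_nonneg ‖proj W z‖]
  exact (pow_le_pow_iff_left₀ (norm_nonneg _) (norm_nonneg _) two_ne_zero).1 this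

lemma resid_eq (W : Submodule ℝ E) (z : E) (h : ‖z - proj W z‖ = ‖z‖) :
    proj W z = 0 := by
  have hp := pythag W z
  rw [h] at hp
  have : ‖proj W z‖ = 0 := by nlinarith
  simpa using this

end aux

theorem stmt13 {E : Type*} [NormedAddCommGroup E] [InnerProductSpace ℝ E] [FiniteDimensional ℝ E]
    (U V : Submodule ℝ E) (y : E) (r s : ℕ → E) (hr0 : r 0 = y)
    (hs : ∀ k, s k = (LinearMap.id - proj U : Module.End ℝ E) (r k))
    (hr : ∀ k, r (k + 1) = (LinearMap.id - proj V : Module.End ℝ E) (s k)) :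
    Tendsto (fun K : ℕ => ∑ k ∈ Finset.range K, (proj U (r k) + proj V (s k)))
      atTop (𝓝 (proj (U ⊔ V) y)) := by
  set M : Submodule ℝ E := U ⊔ V with hM
  set T : Module.End ℝ E := (LinearMap.id - proj V) * (LinearMap.id - proj U) with hT
  have hTapp : ∀ x : E, T x = (x - proj U x) - proj V (x - proj U x) := by
    intro x; simp [hT, Module.End.mul_apply, LinearMap.sub_apply]
  -- residual recursion
  have hrec : ∀ k, r (k + 1) = T (r k) := by
    intro k
    rw [hr k, hs k, hTapp]
    simp [LinearMap.sub_apply]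
  -- telescoping identity
  have hfit : ∀ k, proj U (r k) + proj V (s k) = r k - r (k + 1) := by
    intro k
    rw [hr k, hs k]
    simp only [LinearMap.sub_apply, LinearMap.id_apply]
    abel
  -- orthogonal complement of M
  have hMperp : Mᗮ = Uᗮ ⊓ Vᗮ := (Submodule.inf_orthogonal U V).symm
  -- T fixes Mᗮ
  have hTfix : ∀ x ∈ Mᗮ, T x = x := by
    intro x hx
    rw [hMperp] at hx
    rw [hTapp, proj_eq_zero_of_mem_orthogonal U hx.1, sub_zero,
      proj_eq_zero_of_mem_orthogonal V hx.2, sub_zero]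
  -- T preserves M
  have hTinv : ∀ x ∈ M, T x ∈ M := by
    intro x hx
    rw [hTapp]
    have h1 : proj U x ∈ M := le_sup_left (α := Submodule ℝ E) (proj_mem U x)
    have h2 : x - proj U x ∈ M := M.sub_mem hx h1
    exact M.sub_mem h2 (le_sup_right (α := Submodule ℝ E) (proj_mem V _))
  -- norm bound
  have hTle : ∀ x : E, ‖T x‖ ≤ ‖x‖ := by
    intro x
    rw [hTapp]
    exact le_trans (resid_le V _) (resid_le U x)
  have hTeq : ∀ x : E, ‖T x‖ = ‖x‖ → x ∈ Mᗮ := by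
    intro x hx
    have h1 : ‖x - proj U x‖ ≤ ‖x‖ := resid_le U x
    have h2 : ‖T x‖ ≤ ‖x - proj U x‖ := by rw [hTapp]; exact resid_le V _
    have hU : ‖x - proj U x‖ = ‖x‖ := le_antisymm h1 (by linarith [hx ▸ h2])
    have hpU : proj U x = 0 := resid_eq U x hU
    have hxU : x ∈ Uᗮ := by
      have := sub_proj_mem_orthogonal U x
      rwa [hpU, sub_zero] at this
    have hV : ‖x - proj V x‖ = ‖x‖ := by
      rw [hTapp, hpU, sub_zero] at hx; exact hx
    have hpV : proj V x = 0 := resid_eq V x hV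
    have hxV : x ∈ Vᗮ := by
      have := sub_proj_mem_orthogonal V x
      rwa [hpV, sub_zero] at this
    rw [hMperp]; exact ⟨hxU, hxV⟩
  -- contraction constant on M
  obtain ⟨c, hc0, hc1, hc⟩ : ∃ c : ℝ, 0 ≤ c ∧ c < 1 ∧ ∀ x ∈ M, ‖T x‖ ≤ c * ‖x‖ := by
    by_cases hbot : ∀ x ∈ M, x = (0 : E)
    · exact ⟨0, le_refl 0, one_pos, fun x hx => by simp [hbot x hx]⟩
    · push_neg at hbot
      obtain ⟨x, hxM, hx0⟩ := hbot
      have hTcont : Continuous T := T.continuous_of_finiteDimensional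
      have hScomp : IsCompact (Metric.sphere (0 : E) 1 ∩ (M : Set E)) :=
        (isCompact_sphere (0 : E) 1).inter_right (Submodule.closed_of_finiteDimensional M)
      have hSne : (Metric.sphere (0 : E) 1 ∩ (M : Set E)).Nonempty := by
        refine ⟨‖x‖⁻¹ • x, ?_, M.smul_mem _ hxM⟩
        simp [norm_smul, abs_of_nonneg (inv_nonneg.2 (norm_nonneg x)),
          inv_mul_cancel₀ (norm_ne_zero_iff.2 hx0)]
      obtain ⟨x0, hx0S, hx0max⟩ := hScomp.exists_isMaxOn hSne
        ((continuous_norm.comp hTcont).continuousOn)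
      have hx0n : ‖x0‖ = 1 := by simpa using hx0S.1
      have hx0M : x0 ∈ M := hx0S.2
      refine ⟨‖T x0‖, norm_nonneg _, ?_, ?_⟩
      · rcases lt_or_eq_of_le (hx0n ▸ hTle x0) with h | h
        · exact h
        · exfalso
          have : x0 ∈ Mᗮ := hTeq x0 (by rw [h, hx0n])
          have : x0 = 0 := by
            have := Submodule.mem_inf.2 ⟨hx0M, this⟩
            rwa [Submodule.inf_orthogonal_eq_bot, Submodule.mem_bot] at this
          rw [this] at hx0n; simp at hx0n
      · intro z hzM
        rcases eq_or_ne z 0 with rfl | hz0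
        · simp
        · have hzn : (‖z‖⁻¹ • z) ∈ Metric.sphere (0 : E) 1 ∩ (M : Set E) := by
            constructor
            · simp [norm_smul, abs_of_nonneg (inv_nonneg.2 (norm_nonneg z)),
                inv_mul_cancel₀ (norm_ne_zero_iff.2 hz0)]
            · exact M.smul_mem _ hzM
          have : ‖T (‖z‖⁻¹ • z)‖ ≤ ‖T x0‖ := hx0max hzn
          have hTz : ‖T (‖z‖⁻¹ • z)‖ = ‖z‖⁻¹ * ‖T z‖ := by
            rw [map_smul, norm_smul, Real.norm_eq_abs,
              abs_of_nonneg (inv_nonneg.2 (norm_nonneg z))]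
          rw [hTz] at this
          calc ‖T z‖ = ‖z‖ * (‖z‖⁻¹ * ‖T z‖) := by
                rw [← mul_assoc, mul_inv_cancel₀ (norm_ne_zero_iff.2 hz0), one_mul]
            _ ≤ ‖z‖ * ‖T x0‖ := by
                exact mul_le_mul_of_nonneg_left this (norm_nonneg z)
            _ = ‖T x0‖ * ‖z‖ := mul_comm _ _
  -- decomposition of y
  set m : E := proj M y with hm
  set w : E := y - m with hw
  have hmM : m ∈ M := proj_mem M y
  have hwMp : w ∈ Mᗮ := sub_proj_mem_orthogonal M y
  -- iterates
  have hrk : ∀ k, r k = (T ^ k) m + w ∧ (T ^ k) m ∈ M ∧ ‖(T ^ k) m‖ ≤ c ^ k * ‖m‖ := by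
    intro k
    induction k with
    | zero => exact ⟨by simp [hr0, hw], by simpa using hmM, by simp⟩
    | succ n ih =>
      obtain ⟨h1, h2, h3⟩ := ih
      have hpow : (T ^ (n + 1)) m = T ((T ^ n) m) := by
        rw [pow_succ']; rfl
      refine ⟨?_, ?_, ?_⟩
      · rw [hrec n, h1, map_add, hpow, hTfix w hwMp]
      · rw [hpow]; exact hTinv _ h2
      · rw [hpow]
        calc ‖T ((T ^ n) m)‖ ≤ c * ‖(T ^ n) m‖ := hc _ h2
          _ ≤ c * (c ^ n * ‖m‖) := mul_le_mul_of_nonneg_left h3 hc0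
          _ = c ^ (n + 1) * ‖m‖ := by ring
  -- r k tends to w
  have hTm0 : Tendsto (fun k : ℕ => (T ^ k) m) atTop (𝓝 0) := by
    apply squeeze_zero_norm (fun k => (hrk k).2.2)
    have := tendsto_pow_atTop_nhds_zero_of_lt_one hc0 hc1
    simpa using this.mul_const ‖m‖
  have hrw : Tendsto r atTop (𝓝 w) := by
    have : Tendsto (fun k : ℕ => (T ^ k) m + w) atTop (𝓝 (0 + w)) :=
      hTm0.add tendsto_const_nhds
    rw [zero_add] at this
    exact this.congr (fun k => ((hrk k).1).symm)
  -- sum equals y - r K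
  have hsum : ∀ K : ℕ, ∑ k ∈ Finset.range K, (proj U (r k) + proj V (s k)) = y - r K := by
    intro K
    calc ∑ k ∈ Finset.range K, (proj U (r k) + proj V (s k))
        = ∑ k ∈ Finset.range K, (r k - r (k + 1)) := by
          exact Finset.sum_congr rfl fun k _ => hfit k
      _ = r 0 - r K := Finset.sum_range_sub' r K
      _ = y - r K := by rw [hr0]
  have : Tendsto (fun K : ℕ => y - r K) atTop (𝓝 (y - w)) :=
    tendsto_const_nhds.sub hrw
  have hyw : y - w = proj M y := by rw [hw]; abel
  rw [hyw] at this
  exact this.congr (fun K => (hsum K).symm)
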